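/- arXiv:1403.0123 — 2 statements merged into one kernel-verified Lean document; each statement's English description precedes it below -/
import Mathlib

section
/- Let (R, 𝔪) be a Noetherian local ring, let I be an 𝔪-primary ideal of R, and let J be a reduction of I. Then the Łojasiewicz exponents of I and J coincide: ℒ(I) = ℒ(J). -/
/-- `J` is a reduction of `I`: `J ⊆ I` and `I^(r+1) = J·I^r` for some integer `r > 0`. -/
def IsReductionOf {R : Type*} [CommRing R] (J I : Ideal R) : Prop :=
  J ≤ I ∧ ∃ r : ℕ, 0 < r ∧ I ^ (r + 1) = J * I ^ r

/-- The integral closure of an ideal `I`: the set of all `x ∈ R` satisfying an equation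
`x^k + a₁ x^(k-1) + ⋯ + a_k = 0` with `aᵢ ∈ Iⁱ`. -/
def intClosure {R : Type*} [CommRing R] (I : Ideal R) : Set R :=
  {x | ∃ (k : ℕ) (a : ℕ → R), 0 < k ∧ (∀ i ∈ Finset.Icc 1 k, a i ∈ I ^ i) ∧
      x ^ k + ∑ i ∈ Finset.Icc 1 k, a i * x ^ (k - i) = 0}

/-- The Łojasiewicz exponent `ℒ(I)` of an ideal `I` with respect to the ideal `𝔪`:
the infimum of the set of rationals `p/q` (`p, q` positive integers) such that
`𝔪^p ⊆ closure(I^q)` (integral closure). -/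
noncomputable def lojExp {R : Type*} [CommRing R] (m I : Ideal R) : ℝ :=
  sInf {x : ℝ | ∃ p q : ℕ, 0 < p ∧ 0 < q ∧ x = (p : ℝ) / (q : ℝ) ∧
    ((m ^ p : Ideal R) : Set R) ⊆ intClosure (I ^ q)}

section Aux

open Polynomial

variable {R : Type*} [CommRing R]

lemma ideal_le_sum {ι : Type*} {s : Finset ι} (f : ι → Ideal R) {j : ι} (hj : j ∈ s) :
    f j ≤ ∑ i ∈ s, f i := by
  classical
  rw [← Finset.sum_erase_add _ _ hj, Submodule.add_eq_sup]
  exact le_sup_right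

lemma ideal_sum_le {ι : Type*} {s : Finset ι} {f : ι → Ideal R} {M : Ideal R}
    (h : ∀ i ∈ s, f i ≤ M) : ∑ i ∈ s, f i ≤ M := by
  classical
  induction s using Finset.induction_on with
  | empty => simpa using bot_le
  | insert _ _ hj ih =>
      rw [Finset.sum_insert hj, Submodule.add_eq_sup]
      exact sup_le (h _ (Finset.mem_insert_self _ _))
        (ih fun i hi => h i (Finset.mem_insert_of_mem hi))

lemma ideal_pow_le_pow_left {K L : Ideal R} (h : K ≤ L) (n : ℕ) : K ^ n ≤ L ^ n := by
  induction n with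
  | zero => simp
  | succ n ih => rw [pow_succ, pow_succ]; exact Ideal.mul_mono ih h

lemma intClosure_mono {K L : Ideal R} (h : K ≤ L) : intClosure K ⊆ intClosure L := by
  rintro x ⟨k, a, hk, ha, he⟩
  exact ⟨k, a, hk, fun i hi => ideal_pow_le_pow_left h i (ha i hi), he⟩

lemma mem_intClosure_of_monic {K : Ideal R} {x : R} (g : R[X]) (hm : g.Monic)
    (h0 : 0 < g.natDegree) (hc : ∀ i, g.coeff i ∈ K ^ (g.natDegree - i))
    (he : g.eval x = 0) : x ∈ intClosure K := by
  refine ⟨g.natDegree, fun i => g.coeff (g.natDegree - i), h0, ?_, ?_⟩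
  · intro i hi
    have h2 := (Finset.mem_Icc.mp hi).2
    have := hc (g.natDegree - i)
    rwa [Nat.sub_sub_self h2] at this
  · have hsum : ∑ i ∈ Finset.Icc 1 g.natDegree, g.coeff (g.natDegree - i) * x ^ (g.natDegree - i)
        = ∑ j ∈ Finset.range g.natDegree, g.coeff j * x ^ j := by
      refine Finset.sum_nbij' (fun i => g.natDegree - i) (fun j => g.natDegree - j) ?_ ?_ ?_ ?_ ?_
      · intro i hi
        obtain ⟨h1, h2⟩ := Finset.mem_Icc.mp hi
        show g.natDegree - i ∈ Finset.range g.natDegree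
        exact Finset.mem_range.mpr (by omega)
      · intro j hj
        have := Finset.mem_range.mp hj
        show g.natDegree - j ∈ Finset.Icc 1 g.natDegree
        exact Finset.mem_Icc.mpr (by omega)
      · intro i hi
        obtain ⟨h1, h2⟩ := Finset.mem_Icc.mp hi
        show g.natDegree - (g.natDegree - i) = i
        omega
      · intro j hj
        have := Finset.mem_range.mp hj
        show g.natDegree - (g.natDegree - j) = j
        omega
      · intro i hi; rfl
    rw [hsum]
    have := eval_eq_sum_range (p := g) x
    rw [he] at this
    have h2 : (0 : R) = ∑ j ∈ Finset.range g.natDegree, g.coeff j * x ^ j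
        + g.coeff g.natDegree * x ^ g.natDegree := by
      rw [this, Finset.sum_range_succ]
    rw [hm.coeff_natDegree, one_mul] at h2
    linear_combination -h2

lemma intClosure_subset_of_reduction [IsNoetherianRing R] {K L : Ideal R} (r : ℕ)
    (hr : ∀ m, r ≤ m → L ^ (m + 1) = K * L ^ m) :
    intClosure L ⊆ intClosure K := by
  rintro x ⟨k, a, hk, ha, he⟩
  rcases subsingleton_or_nontrivial R with hS | hS
  · exact ⟨1, fun _ => 0, one_pos, fun i _ => zero_mem _, Subsingleton.elim _ _⟩
  classical
  set xI := Ideal.span {x} with hxI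
  have hxmem : x ∈ xI := Ideal.mem_span_singleton_self x
  let Mi : ℕ → Ideal R := fun N => ∑ i ∈ Finset.range k, xI ^ i * L ^ (N - i)
  have hMi : ∀ N, Mi N = ∑ i ∈ Finset.range k, xI ^ i * L ^ (N - i) := fun _ => rfl
  have hterm_le : ∀ N j, j < k → xI ^ j * L ^ (N - j) ≤ Mi N := by
    intro N j hj
    rw [hMi N]
    exact ideal_le_sum (fun i => xI ^ i * L ^ (N - i)) (Finset.mem_range.mpr hj)
  -- x ^ k ∈ Mi k
  have hxk : x ^ k ∈ Mi k := by
    have hx : x ^ k = -∑ i ∈ Finset.Icc 1 k, a i * x ^ (k - i) := by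
      linear_combination he
    rw [hx]
    refine neg_mem (Submodule.sum_mem _ fun i hi => ?_)
    obtain ⟨h1, h2⟩ := Finset.mem_Icc.mp hi
    refine hterm_le k (k - i) (by omega) ?_
    show a i * x ^ (k - i) ∈ xI ^ (k - i) * L ^ (k - (k - i))
    have h3 : k - (k - i) = i := by omega
    rw [h3, mul_comm (a i)]
    exact Ideal.mul_mem_mul (Ideal.pow_mem_pow hxmem _) (ha i hi)
  have hxIk : xI ^ k ≤ Mi k := by
    rw [hxI, Ideal.span_singleton_pow, Ideal.span_le, Set.singleton_subset_iff]
    exact hxk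
  -- Mi k * L ^ s ≤ Mi (k + s)
  have hMikL : ∀ s : ℕ, Mi k * L ^ s ≤ Mi (k + s) := by
    intro s
    rw [hMi k, Finset.sum_mul]
    refine ideal_sum_le fun j hj => ?_
    have hjk := Finset.mem_range.mp hj
    rw [mul_assoc, ← pow_add]
    have : (k - j) + s = (k + s) - j := by omega
    rw [this]
    exact hterm_le (k + s) j hjk
  -- step: xI * Mi N ≤ Mi (N + 1)
  have hstep : ∀ N, k ≤ N → xI * Mi N ≤ Mi (N + 1) := by
    intro N hN
    rw [hMi N, Finset.mul_sum]
    refine ideal_sum_le fun i hi => ?_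
    have hik := Finset.mem_range.mp hi
    rw [← mul_assoc, ← pow_succ']
    by_cases hik1 : i + 1 < k
    · have : N - i = (N + 1) - (i + 1) := by omega
      rw [this]
      exact hterm_le (N + 1) (i + 1) hik1
    · have hik' : i + 1 = k := by omega
      rw [hik']
      refine le_trans (Ideal.mul_mono_left hxIk) ?_
      have h2 := hMikL (N - i)
      have : k + (N - i) = N + 1 := by omega
      rwa [this] at h2
  -- x ^ N ∈ Mi N for N ≥ k
  have hxN : ∀ N, k ≤ N → x ^ N ∈ Mi N := by
    intro N
    induction N with
    | zero => intro h; omega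
    | succ N ih =>
        intro hN
        by_cases h : k ≤ N
        · have := hstep N h (Ideal.mul_mem_mul hxmem (ih h))
          rwa [← pow_succ'] at this
        · have hkN : k = N + 1 := by omega
          rw [← hkN]; exact hxk
  set n := r + k with hn
  -- xI * Mi n ≤ K * Mi n
  have hKstep : xI * Mi n ≤ K * Mi n := by
    conv_lhs => rw [hMi n]
    rw [Finset.mul_sum]
    refine ideal_sum_le fun i hi => ?_
    have hik := Finset.mem_range.mp hi
    rw [← mul_assoc, ← pow_succ']
    have hsplit : L ^ (n - i) = K * L ^ (n - i - 1) := by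
      have := hr (n - i - 1) (by omega)
      have h2 : n - i - 1 + 1 = n - i := by omega
      rwa [h2] at this
    rw [hsplit, mul_left_comm]
    refine Ideal.mul_mono_right ?_
    by_cases hik1 : i + 1 < k
    · have : n - i - 1 = n - (i + 1) := by omega
      rw [this]
      exact hterm_le n (i + 1) hik1
    · have hik' : i + 1 = k := by omega
      rw [hik']
      refine le_trans (Ideal.mul_mono_left hxIk) ?_
      have h2 := hMikL (n - i - 1)
      have : k + (n - i - 1) = n := by omega
      rwa [this] at h2
  -- the module Mi n is finite
  have hfin : Module.Finite R ↥(Mi n) := Module.Finite.iff_fg.mpr (IsNoetherian.noetherian _)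
  have hmaps : ∀ z ∈ Mi n, (LinearMap.lsmul R R x) z ∈ Mi n := by
    intro z hz
    have : x * z ∈ xI * Mi n := Ideal.mul_mem_mul hxmem hz
    exact (hKstep.trans Ideal.mul_le_right) this
  let f : Module.End R ↥(Mi n) := (LinearMap.lsmul R R x).restrict hmaps
  have hrange : LinearMap.range f ≤ K • (⊤ : Submodule R ↥(Mi n)) := by
    rintro z ⟨w, rfl⟩
    rw [Submodule.mem_smul_top_iff]
    have hfw : ((f w : ↥(Mi n)) : R) = x * (w : R) := rfl
    rw [hfw]
    have : x * (w : R) ∈ K * Mi n := hKstep (Ideal.mul_mem_mul hxmem w.2)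
    rwa [← Ideal.smul_eq_mul] at this
  obtain ⟨p, hmon, -, hcoeff, haeval⟩ :=
    LinearMap.exists_monic_and_coeff_mem_pow_and_aeval_eq_zero_of_range_le_smul R f K hrange
  -- f is the algebra map of x
  have hf : f = algebraMap R (Module.End R ↥(Mi n)) x := by
    ext z
    rfl
  have hxn : x ^ n ∈ Mi n := hxN n (by omega)
  have heval : p.eval x * x ^ n = 0 := by
    rw [hf] at haeval
    have h1 : Polynomial.aeval (algebraMap R (Module.End R ↥(Mi n)) x) p
        = algebraMap R (Module.End R ↥(Mi n)) (Polynomial.aeval x p) :=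
      Polynomial.aeval_algHom_apply (Algebra.ofId R (Module.End R ↥(Mi n))) x p
    rw [h1] at haeval
    have h2 := congrArg (fun g : Module.End R ↥(Mi n) => ((g ⟨x ^ n, hxn⟩ : ↥(Mi n)) : R)) haeval
    simp only [Module.algebraMap_end_apply, LinearMap.zero_apply, ZeroMemClass.coe_zero,
      SetLike.val_smul, smul_eq_mul] at h2
    rwa [← Polynomial.coe_aeval_eq_eval]
  -- build the witness polynomial  p * X ^ n
  refine mem_intClosure_of_monic (p * X ^ n) (hmon.mul (monic_X_pow n)) ?_ ?_ ?_
  · rw [hmon.natDegree_mul (monic_X_pow n), natDegree_X_pow]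
    omega
  · intro i
    rw [hmon.natDegree_mul (monic_X_pow n), natDegree_X_pow, coeff_mul_X_pow']
    split_ifs with hni
    · have := hcoeff (i - n)
      have heq : p.natDegree - (i - n) = p.natDegree + n - i := by omega
      rwa [heq] at this
    · exact zero_mem _
  · rw [eval_mul, eval_pow, eval_X]
    exact heval

end Aux

/-- If `(R, 𝔪)` is a Noetherian local ring, `I` an `𝔪`-primary ideal and `J` a reduction
of `I`, then the Łojasiewicz exponents of `I` and `J` coincide. -/
theorem lojExp_eq_of_isReduction {R : Type*} [CommRing R] [IsNoetherianRing R]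
    [IsLocalRing R] (I J : Ideal R) (hI : I.radical = IsLocalRing.maximalIdeal R)
    (hJI : IsReductionOf J I) :
    lojExp (IsLocalRing.maximalIdeal R) I = lojExp (IsLocalRing.maximalIdeal R) J := by
  obtain ⟨hle, r, hr0, hrEq⟩ := hJI
  have h1 : ∀ m, r ≤ m → I ^ (m + 1) = J * I ^ m := by
    intro m hm
    obtain ⟨s, rfl⟩ := Nat.exists_eq_add_of_le hm
    calc I ^ (r + s + 1) = I ^ (r + 1) * I ^ s := by rw [← pow_add]; ring_nf
      _ = J * I ^ (r + s) := by rw [hrEq, mul_assoc, ← pow_add]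
  have hgen : ∀ s t, r ≤ t → I ^ (t + s) = J ^ s * I ^ t := by
    intro s
    induction s with
    | zero => intro t _; simp
    | succ s ih =>
        intro t ht
        calc I ^ (t + (s + 1)) = I ^ ((t + 1) + s) := by ring_nf
          _ = J ^ s * I ^ (t + 1) := ih (t + 1) (by omega)
          _ = J ^ s * (J * I ^ t) := by rw [h1 t ht]
          _ = J ^ (s + 1) * I ^ t := by ring
  have key : ∀ q, 0 < q → intClosure (I ^ q) = intClosure (J ^ q) := by
    intro q hq
    refine subset_antisymm ?_ (intClosure_mono (ideal_pow_le_pow_left hle q))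
    refine intClosure_subset_of_reduction r ?_
    intro m hm
    rw [← pow_mul, ← pow_mul, Nat.mul_succ]
    exact hgen q (q * m) (le_trans hm (Nat.le_mul_of_pos_left m hq))
  unfold lojExp
  congr 1
  ext y
  constructor
  · rintro ⟨p, q, hp, hq, rfl, hsub⟩
    exact ⟨p, q, hp, hq, rfl, by rw [← key q hq]; exact hsub⟩
  · rintro ⟨p, q, hp, hq, rfl, hsub⟩
    exact ⟨p, q, hp, hq, rfl, by rw [key q hq]; exact hsub⟩
end

section
/- Let U ⊆ ℂⁿ be an open connected neighbourhood of 0, let f = (f_0, …, f_m) ≠ 0 be a sequence of holomorphic functions on U, let S = {x ∈ U : f(x) = 0}, and let π : Y → U be the elementary blowing-up of U by means of f_0, …, f_m. Then π is proper, its range is U, and the restriction of π to Y ∖ π^{-1}(S) is a biholomorphism onto U ∖ S. -/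
open Filter Topology

noncomputable section

/-- `ℂⁿ` as a complex normed space. -/
abbrev ℂn (n : ℕ) : Type := EuclideanSpace ℂ (Fin n)

/-- The complex projective space `ℙᵐ` of lines in `ℂ^{m+1}`. -/
abbrev PP (m : ℕ) : Type := Projectivization ℂ (Fin (m + 1) → ℂ)

/-- The quotient topology on projective space `ℙᵐ`. -/
instance (m : ℕ) : TopologicalSpace (PP m) :=
  instTopologicalSpaceQuotient

/-- The centre `S = {x ∈ U : f(x) = 0}` of the blowing-up. -/
def Sf {n m : ℕ} (U : Set (ℂn n)) (f : Fin (m + 1) → ℂn n → ℂ) : Set (ℂn n) :=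
  {x ∈ U | ∀ i, f i x = 0}

/-- The incidence set
`E(f) = {(x,u) ∈ U × ℙᵐ : f_i(x)u_j = f_j(x)u_i, i,j = 0,…,m}` (the condition is stated
for the chosen representative `u = [u_0 : ⋯ : u_m]` of the projective point; it does not
depend on this choice). -/
def Ef {n m : ℕ} (U : Set (ℂn n)) (f : Fin (m + 1) → ℂn n → ℂ) : Set (ℂn n × PP m) :=
  {p | p.1 ∈ U ∧ ∀ i j, f i p.1 * p.2.rep j = f j p.1 * p.2.rep i}

/-- The total space `Y` of the elementary blowing-up of `U` by means of `f_0, …, f_m`: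
the closure in `U × ℙᵐ` of the part of `E(f)` lying over `U ∖ S`.  The blowing-up itself
is the natural projection `π : Y → U`, i.e. the restriction of the first projection. -/
def Yblow {n m : ℕ} (U : Set (ℂn n)) (f : Fin (m + 1) → ℂn n → ℂ) : Set (ℂn n × PP m) :=
  closure (Ef U f \ {p | p.1 ∈ Sf U f}) ∩ {p | p.1 ∈ U}

/-- The lift of a subset `A ⊆ ℂⁿ × ℙᵐ` to the tautological covering
`ℂⁿ × (ℂ^{m+1} ∖ {0})`. -/
def liftSet {n m : ℕ} (A : Set (ℂn n × PP m)) : Set (ℂn n × (Fin (m + 1) → ℂ)) :=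
  {q | ∃ h : q.2 ≠ 0, (q.1, Projectivization.mk ℂ q.2 h) ∈ A}

/-- `A` is an analytic subset of `Ω` (`Ω` a subset of a complex normed space `E`):
`A ⊆ Ω` and every point of `Ω` has an open neighbourhood `W` on which `A` is the common
zero set of finitely many holomorphic functions. -/
def IsAnalyticIn {E : Type*} [NormedAddCommGroup E] [NormedSpace ℂ E]
    (A Ω : Set E) : Prop :=
  A ⊆ Ω ∧ ∀ z ∈ Ω, ∃ W : Set E, IsOpen W ∧ z ∈ W ∧
    ∃ (N : ℕ) (g : Fin N → E → ℂ),
      (∀ i, ∀ w ∈ W, AnalyticAt ℂ (g i) w) ∧ A ∩ W = {w ∈ W | ∀ i, g i w = 0}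

/-- `A` is an analytic subset of `Ω ⊆ ℂⁿ × ℙᵐ`: the lift of `A` to the tautological
covering `ℂⁿ × (ℂ^{m+1} ∖ {0})` is an analytic subset of the lift of `Ω`. -/
def IsAnalyticSubsetOfProj {n m : ℕ} (A Ω : Set (ℂn n × PP m)) : Prop :=
  A ⊆ Ω ∧ IsAnalyticIn (liftSet A) (liftSet Ω)

/-- The blowing-up projection `π : Y → U`, the restriction of the first projection. -/
def blowPi {n m : ℕ} (U : Set (ℂn n)) (f : Fin (m + 1) → ℂn n → ℂ)
    (p : Yblow U f) : U :=
  ⟨p.1.1, p.2.2⟩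

/-- The restriction of the blowing-up projection `π` to `Y ∖ π⁻¹(S)`, as a map onto
`U ∖ S`. -/
def blowPiRes {n m : ℕ} (U : Set (ℂn n)) (f : Fin (m + 1) → ℂn n → ℂ)
    (p : ↥(Yblow U f \ {q | q.1 ∈ Sf U f})) : ↥(U \ Sf U f) :=
  ⟨p.1.1, p.2.1.2, p.2.2⟩


namespace BlowAux

variable {m : ℕ}

private lemma mul_conj' (z : ℂ) : z * (starRingEnd ℂ) z = ((‖z‖:ℂ))^2 := by
  rw [Complex.mul_conj]; norm_cast; rw [Complex.normSq_eq_norm_sq]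

def Fsub (v : {v : Fin (m+1) → ℂ // v ≠ 0}) : Fin (m+1) → Fin (m+1) → ℂ :=
  fun i j => (v.1 i * (starRingEnd ℂ) (v.1 j)) / ((‖v.1‖ : ℂ))^2

lemma Fsub_respect : ∀ (a b : {v : Fin (m+1) → ℂ // v ≠ 0}) (t : ℂ),
    (a : Fin (m+1) → ℂ) = t • (b : Fin (m+1) → ℂ) → Fsub a = Fsub b := by
  rintro ⟨a, ha⟩ ⟨b, hb⟩ t h
  simp only at h
  subst h
  have ht : t ≠ 0 := by rintro rfl; simp at ha
  have htn : ((‖t‖:ℂ))^2 ≠ 0 := by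
    simpa using fun h => ht (norm_eq_zero.mp h)
  funext i j
  simp only [Fsub, Pi.smul_apply, smul_eq_mul, norm_smul, map_mul]
  push_cast
  rw [mul_pow]
  have : (t * b i) * ((starRingEnd ℂ) t * (starRingEnd ℂ) (b j))
      = ((‖t‖:ℂ))^2 * (b i * (starRingEnd ℂ) (b j)) := by
    rw [← mul_conj' t]; ring
  rw [this, mul_div_mul_left _ _ htn]

def Phi : PP m → (Fin (m+1) → Fin (m+1) → ℂ) :=
  Projectivization.lift Fsub Fsub_respect

lemma continuous_Phi : Continuous (Phi : PP m → _) := by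
  refine Continuous.quotient_lift ?_ _
  refine continuous_pi fun i => continuous_pi fun j => Continuous.div ?_ ?_ ?_
  · exact ((continuous_apply i).comp continuous_subtype_val).mul
      (Complex.continuous_conj.comp ((continuous_apply j).comp continuous_subtype_val))
  · exact (Complex.continuous_ofReal.comp (continuous_norm.comp continuous_subtype_val)).pow 2
  · intro v
    simpa using fun h => v.2 (norm_eq_zero.mp h)

lemma injective_Phi : Function.Injective (Phi : PP m → _) := by
  intro u w huw
  induction u using Projectivization.ind with | h v hv =>
  induction w using Projectivization.ind with | h w hw =>
  have huw' : Fsub ⟨v, hv⟩ = Fsub ⟨w, hw⟩ := huw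
  have hvn : ((‖v‖:ℂ))^2 ≠ 0 := by simpa using fun h => hv (norm_eq_zero.mp h)
  have hwn : ((‖w‖:ℂ))^2 ≠ 0 := by simpa using fun h => hw (norm_eq_zero.mp h)
  obtain ⟨k, hk⟩ : ∃ k, v k ≠ 0 := by
    by_contra hc; push_neg at hc; exact hv (funext hc)
  have hkk := congrFun (congrFun huw' k) k
  simp only [Fsub] at hkk
  have hck : (starRingEnd ℂ) (v k) ≠ 0 := by simpa using hk
  have hwk : w k ≠ 0 := by
    intro h0
    rw [h0] at hkk
    simp only [map_zero, zero_mul, mul_zero, zero_div] at hkk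
    rw [div_eq_zero_iff] at hkk
    rcases hkk with h | h
    · exact hk (by simpa [mul_conj' (v k), pow_eq_zero_iff] using h)
    · exact hvn h
  set c : ℂ := ((starRingEnd ℂ) (w k) * ((‖v‖:ℂ))^2) / ((starRingEnd ℂ) (v k) * ((‖w‖:ℂ))^2)
    with hc
  have hvc : ∀ i, v i = c * w i := by
    intro i
    have hik := congrFun (congrFun huw' i) k
    simp only [Fsub] at hik
    rw [div_eq_div_iff hvn hwn] at hik
    rw [hc, div_mul_eq_mul_div, eq_div_iff (mul_ne_zero hck hwn)]
    linear_combination hik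
  rw [Projectivization.mk_eq_mk_iff']
  exact ⟨c, by funext i; simpa [Pi.smul_apply] using (hvc i).symm⟩

instance : T2Space (PP m) := by
  constructor
  intro x y hxy
  have h : Phi x ≠ Phi y := fun h => hxy (injective_Phi h)
  obtain ⟨U, V, hU, hV, hxU, hyV, hUV⟩ := t2_separation h
  exact ⟨Phi ⁻¹' U, Phi ⁻¹' V, continuous_Phi.isOpen_preimage _ hU,
    continuous_Phi.isOpen_preimage _ hV, hxU, hyV, hUV.preimage _⟩

/-- A total version of the quotient map, with a junk value at `0`. -/
def qmap : (Fin (m+1) → ℂ) → PP m := fun v =>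
  if h : v = 0 then Projectivization.mk ℂ (fun _ => 1)
    (fun hc => one_ne_zero (congrFun hc 0)) else Projectivization.mk ℂ v h

def gsub : (Fin (m+1) → ℂ) → {v : Fin (m+1) → ℂ // v ≠ 0} := fun w =>
  if h : w = 0 then ⟨fun _ => 1, fun hc => one_ne_zero (congrFun hc 0)⟩ else ⟨w, h⟩

lemma qmap_eq : (qmap : (Fin (m+1) → ℂ) → PP m) = Projectivization.mk' ℂ ∘ gsub := by
  funext w
  by_cases h : w = 0 <;> simp [qmap, gsub, h]

lemma qmap_eq_mk {v : Fin (m+1) → ℂ} (h : v ≠ 0) : qmap v = Projectivization.mk ℂ v h := by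
  simp [qmap, h]

lemma continuousAt_qmap {v : Fin (m+1) → ℂ} (hv : v ≠ 0) : ContinuousAt qmap v := by
  rw [qmap_eq]
  refine ContinuousAt.comp (Continuous.continuousAt continuous_quotient_mk') ?_
  rw [Topology.IsEmbedding.subtypeVal.isInducing.continuousAt_iff]
  have hev : (Subtype.val ∘ (gsub : (Fin (m+1) → ℂ) → _)) =ᶠ[𝓝 v] id := by
    filter_upwards [IsOpen.eventually_mem isOpen_compl_singleton
      (Set.mem_compl_singleton_iff.mpr hv)] with w hw
    have hw' : w ≠ 0 := hw
    simp only [Function.comp_apply, gsub, dif_neg hw', id_eq]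
  exact continuousAt_id.congr hev.symm

instance : CompactSpace (PP m) := by
  have hcont : ContinuousOn qmap (Metric.sphere (0 : Fin (m+1) → ℂ) 1) := by
    intro v hv
    have hv0 : v ≠ 0 := by intro h; rw [h] at hv; simp at hv
    exact (continuousAt_qmap hv0).continuousWithinAt
  have hcomp : IsCompact (qmap '' Metric.sphere (0 : Fin (m+1) → ℂ) 1) :=
    (isCompact_sphere 0 1).image_of_continuousOn hcont
  have himg : qmap '' Metric.sphere (0 : Fin (m+1) → ℂ) 1 = Set.univ := by
    refine Set.eq_univ_of_forall fun u => ?_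
    set v : Fin (m+1) → ℂ := (‖u.rep‖ : ℂ)⁻¹ • u.rep with hvdef
    have hrep := u.rep_nonzero
    have hnorm : (‖u.rep‖ : ℂ) ≠ 0 := by
      simpa using fun h => hrep (norm_eq_zero.mp h)
    have hv0 : v ≠ 0 := smul_ne_zero (inv_ne_zero hnorm) hrep
    have hvs : v ∈ Metric.sphere (0 : Fin (m+1) → ℂ) 1 := by
      simp only [mem_sphere_iff_norm, sub_zero, hvdef, norm_smul]
      rw [norm_inv, Complex.norm_real, norm_norm]
      rw [inv_mul_cancel₀ (by simpa using hrep)]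
    refine ⟨v, hvs, ?_⟩
    rw [qmap_eq_mk hv0]
    rw [← u.mk_rep]
    rw [Projectivization.mk_eq_mk_iff']
    exact ⟨(‖u.rep‖ : ℂ)⁻¹, rfl⟩
  exact ⟨by rw [← himg]; exact hcomp⟩

variable {n : ℕ} {U : Set (ℂn n)} {f : Fin (m + 1) → ℂn n → ℂ}

lemma fvec_ne_of_not_mem {x : ℂn n} (hxU : x ∈ U) (hxS : x ∉ Sf U f) :
    (fun i => f i x) ≠ 0 := by
  intro h0
  exact hxS ⟨hxU, fun i => congrFun h0 i⟩

/-- The part of `E(f)` over `U ∖ S` is the graph of `x ↦ [f(x)]`. -/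
lemma G_eq :
    Ef U f \ {p | p.1 ∈ Sf U f}
      = {p : ℂn n × PP m | (p.1 ∈ U ∧ p.1 ∉ Sf U f) ∧ p.2 = qmap (fun i => f i p.1)} := by
  ext p
  constructor
  · rintro ⟨⟨hU1, heq⟩, hnS⟩
    have hS : p.1 ∉ Sf U f := hnS
    refine ⟨⟨hU1, hS⟩, ?_⟩
    have hx : (fun i => f i p.1) ≠ 0 := fvec_ne_of_not_mem hU1 hS
    obtain ⟨k, hk⟩ : ∃ k, f k p.1 ≠ 0 := by
      by_contra hc; push_neg at hc; exact hx (funext hc)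
    have hrep := p.2.rep_nonzero
    have huk : p.2.rep k ≠ 0 := by
      intro h0
      apply hrep
      funext j
      have := heq k j
      rw [h0, mul_zero] at this
      exact (mul_eq_zero.mp this).resolve_left hk
    rw [qmap_eq_mk hx, ← p.2.mk_rep, Projectivization.mk_eq_mk_iff']
    refine ⟨p.2.rep k / f k p.1, ?_⟩
    funext j
    have hkj := heq k j
    simp only [Pi.smul_apply, smul_eq_mul]
    rw [div_mul_eq_mul_div, div_eq_iff hk]
    linear_combination -hkj
  · rintro ⟨⟨hU1, hS⟩, hp2⟩
    have hx : (fun i => f i p.1) ≠ 0 := fvec_ne_of_not_mem hU1 hS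
    refine ⟨⟨hU1, ?_⟩, hS⟩
    rw [hp2, qmap_eq_mk hx]
    obtain ⟨a, ha⟩ := Projectivization.exists_smul_eq_mk_rep ℂ (fun i => f i p.1) hx
    intro i j
    have hai := congrFun ha i
    have haj := congrFun ha j
    simp only [Pi.smul_apply, smul_eq_mul] at hai haj
    rw [← hai, ← haj]
    simp only [Units.smul_def, smul_eq_mul]
    ring

/-- Points of `Y` lying over `U ∖ S` are on the graph of `x ↦ [f(x)]`. -/
lemma key_lemma (hUo : IsOpen U) (hf : ∀ i, ∀ x ∈ U, AnalyticAt ℂ (f i) x)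
    {p : ℂn n × PP m} (hp : p ∈ Yblow U f) (hpS : p.1 ∉ Sf U f) :
    p.2 = qmap (fun i => f i p.1) := by
  obtain ⟨hpc, hpU⟩ := hp
  have hpU' : p.1 ∈ U := hpU
  have hx : (fun i => f i p.1) ≠ 0 := fvec_ne_of_not_mem hpU' hpS
  set G : Set (ℂn n × PP m) :=
    {q : ℂn n × PP m | (q.1 ∈ U ∧ q.1 ∉ Sf U f) ∧ q.2 = qmap (fun i => f i q.1)} with hG
  have hclos : p ∈ closure G := by rw [hG, ← G_eq]; exact hpc
  set Ψ : ℂn n × PP m → PP m × PP m := fun q => (q.2, qmap (fun i => f i q.1)) with hΨ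
  have hfc : ContinuousAt (fun x : ℂn n => (fun i => f i x)) p.1 := by
    rw [continuousAt_pi]
    exact fun i => (hf i p.1 hpU').continuousAt
  have hΨc : ContinuousAt Ψ p := by
    refine ContinuousAt.prodMk ?_ ?_
    · exact continuous_snd.continuousAt
    · exact ((continuousAt_qmap hx).comp hfc).comp continuous_fst.continuousAt
  have hmem : Ψ p ∈ closure (Ψ '' G) :=
    hΨc.continuousWithinAt.mem_closure_image hclos
  have hdiag : Ψ '' G ⊆ Set.diagonal (PP m) := by
    rintro q ⟨r, hr, rfl⟩
    exact hr.2
  have hdiag2 : Ψ p ∈ Set.diagonal (PP m) := by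
    have h3 := closure_mono hdiag hmem
    rwa [isClosed_diagonal.closure_eq] at h3
  exact Set.mem_diagonal_iff.mp hdiag2

lemma mem_Yblow {x : ℂn n} (hxU : x ∈ U) (hxS : x ∉ Sf U f) :
    (x, qmap (fun i => f i x)) ∈ Yblow U f := by
  refine ⟨subset_closure ?_, hxU⟩
  rw [G_eq]
  exact ⟨⟨hxU, hxS⟩, rfl⟩

/-- The identity theorem: `U ∖ S` is dense in `U`. -/
lemma dense_compl (hUo : IsOpen U) (hUc : IsConnected U)
    (hf : ∀ i, ∀ x ∈ U, AnalyticAt ℂ (f i) x) (hne : ∃ x ∈ U, ∃ i, f i x ≠ 0) :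
    ∀ x ∈ U, x ∈ closure (U \ Sf U f) := by
  intro x hx
  by_contra h
  rw [mem_closure_iff] at h
  push_neg at h
  obtain ⟨o, ho, hxo, hdisj⟩ := h
  have hsub : o ∩ U ⊆ Sf U f := by
    rintro y ⟨hyo, hyU⟩
    by_contra hyS
    have hne' : (o ∩ (U \ Sf U f)).Nonempty := ⟨y, hyo, hyU, hyS⟩
    exact Set.nonempty_iff_ne_empty.mp hne' hdisj
  obtain ⟨x', hx'U, i, hfi⟩ := hne
  apply hfi
  have hana : AnalyticOnNhd ℂ (f i) U := fun z hz => hf i z hz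
  have hev : f i =ᶠ[𝓝 x] 0 := by
    filter_upwards [(ho.inter hUo).mem_nhds ⟨hxo, hx⟩] with y hy
    exact (hsub hy).2 i
  exact hana.eqOn_zero_of_preconnected_of_eventuallyEq_zero hUc.isPreconnected hx hev hx'U

end BlowAux

open BlowAux in
/-- **Proposition (ii).**  The blowing-up projection `π : Y → U` is proper, its range is
`U`, and its restriction to `Y ∖ π⁻¹(S)` is a biholomorphism onto `U ∖ S`: it is a
homeomorphism onto `U ∖ S` whose inverse is the holomorphic map
`x ↦ (x, [f_0(x) : ⋯ : f_m(x)])` (while `π` itself is the restriction of a linear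
projection, hence holomorphic). -/
theorem blowup_proper_surjective_biholomorphic (n m : ℕ)
    (U : Set (ℂn n)) (hUo : IsOpen U) (hUc : IsConnected U) (hU0 : (0 : ℂn n) ∈ U)
    (f : Fin (m + 1) → ℂn n → ℂ) (hf : ∀ i, ∀ x ∈ U, AnalyticAt ℂ (f i) x)
    (hne : ∃ x ∈ U, ∃ i, f i x ≠ 0) :
    IsProperMap (blowPi U f) ∧
    Function.Surjective (blowPi U f) ∧
    IsHomeomorph (blowPiRes U f) ∧
    ∀ x : ↥(U \ Sf U f),
      ∀ p : ↥(Yblow U f \ {q | q.1 ∈ Sf U f}),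
        blowPiRes U f p = x →
        (p : ℂn n × PP m) =
          (x.1, Projectivization.mk ℂ (fun i => f i x.1)
            (fun h0 => x.2.2 ⟨x.2.1, fun i => congrFun h0 i⟩)) := by
  classical
  -- the closed embedding `j : Y → U × ℙᵐ`
  set j : ↥(Yblow U f) → ↥U × PP m := fun p => (⟨p.1.1, p.2.2⟩, p.1.2) with hj
  have hjcont : Continuous j := by
    refine Continuous.prodMk ?_ ?_
    · exact Continuous.subtype_mk (continuous_fst.comp continuous_subtype_val) _
    · exact continuous_snd.comp continuous_subtype_val
  set k : ↥U × PP m → ℂn n × PP m := fun q => (q.1.1, q.2) with hk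
  have hkcont : Continuous k :=
    (continuous_subtype_val.comp continuous_fst).prodMk continuous_snd
  have hkemb : Topology.IsEmbedding k :=
    Topology.IsEmbedding.subtypeVal.prodMap Topology.IsEmbedding.id
  have hkj : k ∘ j = Subtype.val := rfl
  have hjemb : Topology.IsEmbedding j :=
    Topology.IsEmbedding.of_comp hjcont hkcont
      (by rw [hkj]; exact Topology.IsEmbedding.subtypeVal)
  have hrange : Set.range j = k ⁻¹' (closure (Ef U f \ {p | p.1 ∈ Sf U f})) := by
    ext q
    constructor
    · rintro ⟨p, rfl⟩
      exact p.2.1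
    · intro hq
      exact ⟨⟨(q.1.1, q.2), ⟨hq, q.1.2⟩⟩, rfl⟩
  have hjclosed : Topology.IsClosedEmbedding j :=
    ⟨hjemb, by rw [hrange]; exact isClosed_closure.preimage hkcont⟩
  -- `fst : U × ℙᵐ → U` is proper since `ℙᵐ` is compact
  have hfst : IsProperMap (Prod.fst : ↥U × PP m → ↥U) := by
    have h1 : IsProperMap
        (Prod.map (id : ↥U → ↥U) (fun _ : PP m => PUnit.unit) : ↥U × PP m → ↥U × PUnit.{1}) :=
      isProperMap_id.prodMap (continuous_const.isProperMap)
    have h2 : IsProperMap ⇑(Homeomorph.prodPUnit ↥U : ↥U × PUnit.{1} ≃ₜ ↥U) :=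
      Homeomorph.isProperMap _
    have h3 := h2.comp h1
    convert h3 using 1
    funext q; rfl
  have hpi : blowPi U f = Prod.fst ∘ j := rfl
  have hproper : IsProperMap (blowPi U f) := by
    rw [hpi]; exact hfst.comp hjclosed.isProperMap
  refine ⟨hproper, ?_, ?_, ?_⟩
  · -- surjectivity
    intro x
    have hclosed : IsClosed (Set.range (blowPi U f)) := hproper.isClosed_range
    have hsub : (Subtype.val ⁻¹' (U \ Sf U f) : Set ↥U) ⊆ Set.range (blowPi U f) := by
      rintro y hy
      exact ⟨⟨(y.1, qmap (fun i => f i y.1)), mem_Yblow hy.1 hy.2⟩, Subtype.ext rfl⟩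
    have hx : x ∈ closure (Subtype.val ⁻¹' (U \ Sf U f) : Set ↥U) := by
      rw [closure_subtype]
      refine closure_mono ?_ (dense_compl hUo hUc hf hne x.1 x.2)
      intro z hz
      exact ⟨⟨z, hz.1⟩, hz, rfl⟩
    have := closure_mono hsub hx
    rwa [hclosed.closure_eq] at this
  · -- homeomorphism
    rw [isHomeomorph_iff_exists_inverse]
    refine ⟨?_, ?_⟩
    · show Continuous fun p : ↥(Yblow U f \ {q | q.1 ∈ Sf U f}) =>
        (⟨p.1.1, p.2.1.2, p.2.2⟩ : ↥(U \ Sf U f))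
      exact Continuous.subtype_mk (continuous_fst.comp continuous_subtype_val) _
    · refine ⟨fun x => ⟨(x.1, qmap (fun i => f i x.1)),
        mem_Yblow x.2.1 x.2.2, x.2.2⟩, ?_, ?_, ?_⟩
      · -- left inverse
        intro p
        refine Subtype.ext (Prod.ext rfl ?_)
        exact (key_lemma hUo hf p.2.1 p.2.2).symm
      · -- right inverse
        intro x
        exact Subtype.ext rfl
      · -- continuity of the inverse
        rw [continuous_iff_continuousAt]
        intro x
        rw [Topology.IsInducing.subtypeVal.continuousAt_iff]
        refine ContinuousAt.prodMk ?_ ?_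
        · exact continuous_subtype_val.continuousAt
        · have hfc : ContinuousAt (fun y : ℂn n => (fun i => f i y)) x.1 := by
            rw [continuousAt_pi]
            exact fun i => (hf i x.1 x.2.1).continuousAt
          exact ((continuousAt_qmap (fvec_ne_of_not_mem x.2.1 x.2.2)).comp hfc).comp
            continuous_subtype_val.continuousAt
  · -- formula for the inverse
    intro x p hpx
    have h1 : p.1.1 = x.1 := congrArg Subtype.val hpx
    have h2 : p.1.2 = qmap (fun i => f i p.1.1) := key_lemma hUo hf p.2.1 p.2.2
    refine Prod.ext h1 ?_
    rw [h2, h1, qmap_eq_mk (fvec_ne_of_not_mem x.2.1 x.2.2)]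


end
end
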